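/- Let G be a graph on n vertices with maximum degree Δ ≥ 1 and degeneracy Δ − 1, and let α be a (Δ+1)-colouring of G. Then there exists a Δ-colouring γ of G with d_{Δ+1}(α, γ) ≤ n². -/

import Mathlib

set_option linter.unusedSectionVars false
set_option linter.unusedVariables false
set_option maxHeartbeats 1000000

/-- `G` is `p`-degenerate. -/
def Degenerate {V : Type} [Fintype V] [DecidableEq V] (G : SimpleGraph V)
    [DecidableRel G.Adj] (p : ℕ) : Prop :=
  ∀ S : Finset V, S.Nonempty → ∃ v ∈ S, (S.filter (G.Adj v)).card ≤ p

/-- `β` is reachable from `α` in the reconfiguration graph of proper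
`Fin k`-colourings of `G` by a path of length at most `N`. -/
def Reach {V : Type} {k : ℕ} (G : SimpleGraph V) (α β : V → Fin k) (N : ℕ) : Prop :=
  ∃ (m : ℕ) (f : ℕ → V → Fin k), m ≤ N ∧ f 0 = α ∧ f m = β ∧
    (∀ i, i ≤ m → ∀ u v, G.Adj u v → f i u ≠ f i v) ∧
    ∀ i, i < m → ∃! v, f i v ≠ f (i + 1) v

namespace DegenReachAux

variable {V : Type} [Fintype V] [DecidableEq V] (G : SimpleGraph V) [DecidableRel G.Adj]

theorem reach_refl {k : ℕ} (α : V → Fin k)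
    (h : ∀ u v, G.Adj u v → α u ≠ α v) (N : ℕ) : Reach G α α N :=
  ⟨0, fun _ => α, Nat.zero_le _, rfl, rfl, fun _ _ => h, fun i hi => absurd hi (by omega)⟩

theorem reach_mono {k : ℕ} {α β : V → Fin k} {N M : ℕ} (hNM : N ≤ M)
    (h : Reach G α β N) : Reach G α β M := by
  obtain ⟨m, f, hm, h0, hM, hp, hs⟩ := h
  exact ⟨m, f, by omega, h0, hM, hp, hs⟩

theorem reach_trans {k : ℕ} {α β γ : V → Fin k} {N M : ℕ}
    (h1 : Reach G α β N) (h2 : Reach G β γ M) : Reach G α γ (N + M) := by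
  obtain ⟨m1, f1, hm1, h10, h1m, h1p, h1s⟩ := h1
  obtain ⟨m2, f2, hm2, h20, h2m, h2p, h2s⟩ := h2
  set F : ℕ → V → Fin k := fun i => if i < m1 then f1 i else f2 (i - m1) with hF
  have hup : ∀ i, m1 ≤ i → F i = f2 (i - m1) := by
    intro i hi
    simp only [hF, if_neg (by omega : ¬ i < m1)]
  have hlo : ∀ i, i ≤ m1 → F i = f1 i := by
    intro i hi
    rcases lt_or_eq_of_le hi with h | h
    · simp only [hF, if_pos h]
    · subst h
      rw [hup i le_rfl]
      simp [h1m, ← h20]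
  refine ⟨m1 + m2, F, by omega, ?_, ?_, ?_, ?_⟩
  · rw [hlo 0 (Nat.zero_le _), h10]
  · rw [hup (m1 + m2) (by omega)]
    simpa using h2m
  · intro i hi u v huv
    rcases le_or_gt i m1 with h | h
    · rw [hlo i h]; exact h1p i h u v huv
    · rw [hup i (le_of_lt h)]
      exact h2p (i - m1) (by omega) u v huv
  · intro i hi
    rcases lt_or_ge i m1 with h | h
    · rw [hlo i (le_of_lt h), hlo (i+1) (by omega)]
      exact h1s i h
    · rw [hup i h, hup (i+1) (by omega)]
      have : i + 1 - m1 = (i - m1) + 1 := by omega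
      rw [this]
      exact h2s (i - m1) (by omega)


theorem exists_rank_on {p : ℕ} (hdeg : Degenerate G p) :
    ∀ S : Finset V, ∃ r : V → ℕ, (∀ v ∈ S, r v < S.card) ∧ (Set.InjOn r S) ∧
      ∀ v ∈ S, (S.filter (fun u => G.Adj v u ∧ r v < r u)).card ≤ p := by
  intro S
  induction S using Finset.strongInduction with
  | _ S ih =>
    rcases Finset.eq_empty_or_nonempty S with rfl | hne
    · exact ⟨fun _ => 0, by simp, by simp, by simp⟩
    · obtain ⟨v₀, hv₀S, hv₀⟩ := hdeg S hne
      obtain ⟨r', hr'1, hr'2, hr'3⟩ := ih (S.erase v₀) (Finset.erase_ssubset hv₀S)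
      refine ⟨fun v => if v = v₀ then 0 else r' v + 1, ?_, ?_, ?_⟩
      · intro v hv
        by_cases h : v = v₀
        · simp only [h, if_pos rfl]
          exact Finset.card_pos.mpr hne
        · simp only [if_neg h]
          have := hr'1 v (Finset.mem_erase.mpr ⟨h, hv⟩)
          have := Finset.card_erase_of_mem hv₀S
          omega
      · intro u hu w hw huw
        simp only at huw
        by_cases h1 : u = v₀ <;> by_cases h2 : w = v₀
        · rw [h1, h2]
        · rw [if_pos h1, if_neg h2] at huw; omega
        · rw [if_neg h1, if_pos h2] at huw; omega
        · rw [if_neg h1, if_neg h2] at huw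
          exact hr'2 (Finset.mem_erase.mpr ⟨h1, hu⟩) (Finset.mem_erase.mpr ⟨h2, hw⟩) (by omega)
      · intro v hv
        by_cases h : v = v₀
        · subst h
          refine le_trans (Finset.card_le_card ?_) hv₀
          intro u hu
          simp only [Finset.mem_filter] at hu ⊢
          exact ⟨hu.1, hu.2.1⟩
        · have hveq : S.filter (fun u => G.Adj v u ∧ (if v = v₀ then 0 else r' v + 1) <
              (if u = v₀ then 0 else r' u + 1)) =
              (S.erase v₀).filter (fun u => G.Adj v u ∧ r' v < r' u) := by
            ext u
            simp only [Finset.mem_filter, Finset.mem_erase]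
            constructor
            · rintro ⟨huS, hadj, hlt⟩
              rw [if_neg h] at hlt
              by_cases h2 : u = v₀
              · rw [if_pos h2] at hlt; omega
              · rw [if_neg h2] at hlt
                exact ⟨⟨h2, huS⟩, hadj, by omega⟩
            · rintro ⟨⟨h2, huS⟩, hadj, hlt⟩
              rw [if_neg h, if_neg h2]
              exact ⟨huS, hadj, by omega⟩
          rw [hveq]
          exact hr'3 v (Finset.mem_erase.mpr ⟨h, hv⟩)

theorem exists_rank {p : ℕ} (hdeg : Degenerate G p) :
    ∃ rank : V → ℕ, Function.Injective rank ∧ (∀ v, rank v < Fintype.card V) ∧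
      (∀ v, ((G.neighborFinset v).filter (fun u => rank v < rank u)).card ≤ p) ∧
      (∀ j, j < Fintype.card V → ∃ x, rank x = j) := by
  obtain ⟨r, h1, h2, h3⟩ := exists_rank_on G hdeg Finset.univ
  have hinj : Function.Injective r := by
    intro a b hab
    exact h2 (Finset.mem_univ a) (Finset.mem_univ b) hab
  have hlt : ∀ v, r v < Fintype.card V := by
    intro v; simpa using h1 v (Finset.mem_univ v)
  refine ⟨r, hinj, hlt, ?_, ?_⟩
  · intro v
    have : (G.neighborFinset v).filter (fun u => r v < r u) =
        Finset.univ.filter (fun u => G.Adj v u ∧ r v < r u) := by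
      ext u
      simp [SimpleGraph.mem_neighborFinset]
    rw [this]
    simpa using h3 v (Finset.mem_univ v)
  · intro j hj
    have himg : Finset.univ.image r = Finset.range (Fintype.card V) := by
      apply Finset.eq_of_subset_of_card_le
      · intro x hx
        simp only [Finset.mem_image] at hx
        obtain ⟨a, _, rfl⟩ := hx
        exact Finset.mem_range.mpr (hlt a)
      · rw [Finset.card_range, Finset.card_image_of_injective _ hinj, Finset.card_univ]
    have : j ∈ Finset.univ.image r := by
      rw [himg]; exact Finset.mem_range.mpr hj
    simp only [Finset.mem_image] at this
    obtain ⟨x, _, hx⟩ := this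
    exact ⟨x, hx⟩


/-- A vertex is stuck if every other colour appears on a neighbour. -/
def Stuck {Δ : ℕ} (β : V → Fin (Δ + 1)) (v : V) : Prop :=
  ∀ c : Fin (Δ + 1), c ≠ β v → ∃ u, G.Adj v u ∧ β u = c

theorem stuck_card {Δ : ℕ} {β : V → Fin (Δ + 1)} {v : V}
    (hβ : ∀ u w, G.Adj u w → β u ≠ β w) (hv : Stuck G β v) :
    Δ ≤ ((G.neighborFinset v).image β).card := by
  have himg : Finset.univ.erase (β v) ⊆ (G.neighborFinset v).image β := by
    intro c hc
    obtain ⟨u, hu1, hu2⟩ := hv c (Finset.mem_erase.mp hc).1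
    exact Finset.mem_image.mpr ⟨u, (SimpleGraph.mem_neighborFinset G v u).mpr hu1, hu2⟩
  calc Δ = (Finset.univ.erase (β v)).card := by
        rw [Finset.card_erase_of_mem (Finset.mem_univ _), Finset.card_univ, Fintype.card_fin]
        omega
    _ ≤ _ := Finset.card_le_card himg

theorem stuck_unique {Δ : ℕ} {β : V → Fin (Δ + 1)} {v : V}
    (hΔ : 1 ≤ Δ) (hdegΔ : ∀ v, G.degree v ≤ Δ)
    (hβ : ∀ u w, G.Adj u w → β u ≠ β w) (hv : Stuck G β v) :
    ∀ u w, G.Adj v u → G.Adj v w → β u = β w → u = w := by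
  intro u w hu hw huw
  by_contra hne
  have h2 : (G.neighborFinset v).image β ⊆ ((G.neighborFinset v).erase u).image β := by
    intro c hc
    obtain ⟨t, ht, htc⟩ := Finset.mem_image.mp hc
    by_cases h : t = u
    · subst h
      refine Finset.mem_image.mpr ⟨w, Finset.mem_erase.mpr
        ⟨fun h => hne h.symm, (SimpleGraph.mem_neighborFinset G v w).mpr hw⟩, ?_⟩
      rw [← huw, htc]
    · exact Finset.mem_image.mpr ⟨t, Finset.mem_erase.mpr ⟨h, ht⟩, htc⟩
  have h3 := stuck_card G hβ hv
  have h4 : ((G.neighborFinset v).erase u).card = (G.neighborFinset v).card - 1 :=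
    Finset.card_erase_of_mem ((SimpleGraph.mem_neighborFinset G v u).mpr hu)
  have h5 : (G.neighborFinset v).card ≤ Δ := by
    rw [SimpleGraph.card_neighborFinset_eq_degree]; exact hdegΔ v
  have h6 := Finset.card_le_card h2
  have h7 := Finset.card_image_le (s := (G.neighborFinset v).erase u) (f := β)
  omega

theorem stuck_smaller {Δ : ℕ} {β : V → Fin (Δ + 1)} {v : V} {rank : V → ℕ}
    (hΔ : 1 ≤ Δ) (hrinj : Function.Injective rank)
    (hlater : ∀ v, ((G.neighborFinset v).filter (fun u => rank v < rank u)).card ≤ Δ - 1)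
    (hβ : ∀ u w, G.Adj u w → β u ≠ β w) (hv : Stuck G β v) :
    ∃ u, G.Adj v u ∧ rank u < rank v := by
  by_contra h
  push_neg at h
  have hfe : (G.neighborFinset v).filter (fun u => rank v < rank u) = G.neighborFinset v := by
    apply Finset.filter_true_of_mem
    intro u hu
    have hadj := (SimpleGraph.mem_neighborFinset G v u).mp hu
    have h1 := h u hadj
    have h2 : rank u ≠ rank v := fun he => (G.ne_of_adj hadj).symm (hrinj he)
    omega
  have h3 := stuck_card G hβ hv
  have h4 := Finset.card_image_le (s := G.neighborFinset v) (f := β)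
  have h5 := hlater v
  rw [hfe] at h5
  omega

/-- a blocking chain: consecutive adjacent, rank strictly decreasing,
all stuck except the last. -/
def IsChain {Δ : ℕ} (rank : V → ℕ) (β : V → Fin (Δ + 1)) (s : ℕ) (z : ℕ → V) : Prop :=
  (∀ k, k < s → G.Adj (z k) (z (k+1)) ∧ rank (z (k+1)) < rank (z k) ∧ Stuck G β (z k)) ∧
    ¬ Stuck G β (z s)

theorem exists_chain {Δ : ℕ} {β : V → Fin (Δ + 1)} {rank : V → ℕ}
    (hΔ : 1 ≤ Δ) (hrinj : Function.Injective rank)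
    (hlater : ∀ v, ((G.neighborFinset v).filter (fun u => rank v < rank u)).card ≤ Δ - 1)
    (hβ : ∀ u w, G.Adj u w → β u ≠ β w) :
    ∀ x : V, ∃ s z, z 0 = x ∧ IsChain G rank β s z := by
  have KEY : ∀ r x, rank x < r → ∃ s z, z 0 = x ∧ IsChain G rank β s z := by
    intro r
    induction r with
    | zero => intro x hx; omega
    | succ r ih =>
      intro x hx
      by_cases hst : Stuck G β x
      · obtain ⟨y, hy1, hy2⟩ := stuck_smaller G hΔ hrinj hlater hβ hst
        obtain ⟨s, z, hz0, hz⟩ := ih y (by omega)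
        refine ⟨s + 1, fun k => match k with | 0 => x | (k+1) => z k, rfl, ?_, ?_⟩
        · intro k hk
          match k with
          | 0 =>
            refine ⟨?_, ?_, hst⟩
            · show G.Adj x (z 0)
              rw [hz0]; exact hy1
            · show rank (z 0) < rank x
              rw [hz0]; exact hy2
          | (k+1) => exact hz.1 k (by omega)
        · exact hz.2
      · exact ⟨0, fun _ => x, rfl, fun k hk => absurd hk (by omega), hst⟩
  intro x
  exact KEY (rank x + 1) x (by omega)

theorem chain_rank {Δ : ℕ} {β : V → Fin (Δ + 1)} {rank : V → ℕ} {s : ℕ} {z : ℕ → V}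
    (hz : IsChain G rank β s z) :
    ∀ k, k ≤ s → ∀ j, j ≤ k → rank (z k) + (k - j) ≤ rank (z j) := by
  intro k
  induction k with
  | zero => intro _ j hj; interval_cases j; simp
  | succ k ih =>
    intro hk j hj
    rcases Nat.eq_or_lt_of_le hj with h | h
    · subst h; simp
    · have h1 := (hz.1 k (by omega)).2.1
      have h2 := ih (by omega) j (by omega)
      omega

theorem chain_induced {Δ : ℕ} {β : V → Fin (Δ + 1)} {rank : V → ℕ} {s : ℕ} {z : ℕ → V}
    {x : V} (hz0 : z 0 = x) (hz : IsChain G rank β s z)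
    (hmin : ∀ s' z', z' 0 = x → IsChain G rank β s' z' → s ≤ s') :
    ∀ j m, j + 2 ≤ m → m ≤ s → ¬ G.Adj (z j) (z m) := by
  intro j m hjm hms hadj
  set d := m - j - 1 with hd
  have hd1 : 1 ≤ d := by omega
  have hds : d + j + 1 = m := by omega
  set z'' : ℕ → V := fun k => if k ≤ j then z k else z (k + d) with hz''
  have hlast : z'' (s - d) = z s := by
    simp only [hz'', if_neg (by omega : ¬ s - d ≤ j)]
    congr 1
    omega
  have : IsChain G rank β (s - d) z'' := by
    constructor
    · intro k hk
      rcases lt_trichotomy k j with h | h | h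
      · simp only [hz'', if_pos (by omega : k ≤ j), if_pos (by omega : k + 1 ≤ j)]
        exact hz.1 k (by omega)
      · subst h
        simp only [hz'', if_pos le_rfl, if_neg (by omega : ¬ k + 1 ≤ k)]
        have hm : k + 1 + d = m := by omega
        rw [hm]
        refine ⟨hadj, ?_, (hz.1 k (by omega)).2.2⟩
        have := chain_rank G hz m hms k (by omega)
        omega
      · simp only [hz'', if_neg (by omega : ¬ k ≤ j), if_neg (by omega : ¬ k + 1 ≤ j)]
        have : k + 1 + d = (k + d) + 1 := by omega
        rw [this]
        exact hz.1 (k + d) (by omega)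
    · rw [hlast]; exact hz.2
  have := hmin (s - d) z'' (by simp [hz'', hz0]) this
  omega


theorem phase {Δ : ℕ} (hΔ : 1 ≤ Δ) (hdegΔ : ∀ v, G.degree v ≤ Δ)
    {rank : V → ℕ} (hrinj : Function.Injective rank)
    (hlater : ∀ v, ((G.neighborFinset v).filter (fun u => rank v < rank u)).card ≤ Δ - 1)
    {β : V → Fin (Δ + 1)} (hβ : ∀ u w, G.Adj u w → β u ≠ β w)
    (x : V) (hx : β x = Fin.last Δ) :
    ∃ β' : V → Fin (Δ + 1), Reach G β β' (rank x + 1) ∧ (∀ u w, G.Adj u w → β' u ≠ β' w)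
      ∧ β' x ≠ Fin.last Δ ∧ ∀ v, rank x < rank v → β' v = β v := by
  classical
  -- minimal chain
  have hPex : ∃ s, ∃ z, z 0 = x ∧ IsChain G rank β s z := by
    obtain ⟨s, z, h1, h2⟩ := exists_chain G hΔ hrinj hlater hβ x
    exact ⟨s, z, h1, h2⟩
  set s := Nat.find hPex with hs
  obtain ⟨z, hz0, hz⟩ := Nat.find_spec hPex
  have hmin : ∀ s' z', z' 0 = x → IsChain G rank β s' z' → s ≤ s' := by
    intro s' z' h1 h2
    exact Nat.find_min' hPex ⟨z', h1, h2⟩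
  have hind := chain_induced G hz0 hz hmin
  -- rank facts
  have hrk : ∀ k, k ≤ s → rank (z k) + k ≤ rank x := by
    intro k hk
    have := chain_rank G hz k hk 0 (by omega)
    rw [hz0] at this
    omega
  have hnd : ∀ j k, j ≤ s → k ≤ s → j ≠ k → z j ≠ z k := by
    have key : ∀ j k, j < k → k ≤ s → z j ≠ z k := by
      intro j k hjk hks he
      have h1 := chain_rank G hz k hks j (by omega)
      rw [← he] at h1
      omega
    intro j k hj hk hjk
    rcases lt_or_gt_of_ne hjk with h | h
    · exact key j k h hk
    · exact fun he => key k j h hj he.symm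
  -- the free colour at the end of the chain
  have hns : ∃ c : Fin (Δ + 1), c ≠ β (z s) ∧ ∀ u, G.Adj (z s) u → β u ≠ c := by
    have h := hz.2
    unfold Stuck at h
    push_neg at h
    obtain ⟨c, h1, h2⟩ := h
    exact ⟨c, h1, h2⟩
  obtain ⟨cf, hcf1, hcf2⟩ := hns
  -- targets
  set τ : ℕ → Fin (Δ + 1) := fun k => if k = s then cf else β (z (k+1)) with hτ
  have htau_ne : ∀ k, k ≤ s → τ k ≠ β (z k) := by
    intro k hk
    rcases Nat.eq_or_lt_of_le hk with h | h
    · subst h; simp only [hτ, if_pos rfl]; exact hcf1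
    · simp only [hτ, if_neg (by omega : ¬ k = s)]
      exact fun he => hβ _ _ (hz.1 k h).1 he.symm
  have htau_step : ∀ k, k < s → τ k ≠ τ (k+1) := by
    intro k hk
    have h1 : τ k = β (z (k+1)) := by simp only [hτ, if_neg (by omega : ¬ k = s)]
    rw [h1]
    exact fun he => htau_ne (k+1) (by omega) he.symm
  have htau_free : ∀ k, k ≤ s → ∀ u, G.Adj (z k) u → (k < s → u ≠ z (k+1)) → β u ≠ τ k := by
    intro k hk u hu hne
    rcases Nat.eq_or_lt_of_le hk with h | h
    · subst h
      simp only [hτ, if_pos rfl]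
      exact hcf2 u hu
    · simp only [hτ, if_neg (by omega : ¬ k = s)]
      intro he
      exact hne h (stuck_unique G hΔ hdegΔ hβ (hz.1 k h).2.2 u (z (k+1)) hu (hz.1 k h).1 he)
  -- the execution
  set g : ℕ → V → Fin (Δ + 1) := fun t =>
    Nat.rec (motive := fun _ => V → Fin (Δ + 1)) β
      (fun t' gt => Function.update gt (z (s - t')) (τ (s - t'))) t with hgdef
  have hg0 : g 0 = β := rfl
  have hgs : ∀ t, g (t+1) = Function.update (g t) (z (s - t)) (τ (s - t)) := fun t => rfl
  have INV : ∀ t, t ≤ s + 1 →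
      (∀ k, k ≤ s → (s + 1 - t ≤ k → g t (z k) = τ k) ∧ (k < s + 1 - t → g t (z k) = β (z k)))
      ∧ (∀ v, (∀ k, k ≤ s → v ≠ z k) → g t v = β v)
      ∧ (∀ u w, G.Adj u w → g t u ≠ g t w) := by
    intro t
    induction t with
    | zero =>
      intro _
      refine ⟨fun k hk => ⟨fun h => absurd h (by omega), fun _ => rfl⟩, fun v _ => rfl, hβ⟩
    | succ t ih =>
      intro ht
      obtain ⟨ih1, ih2, ih3⟩ := ih (by omega)
      have hts : t ≤ s := by omega
      have hval : ∀ k, k ≤ s → g (t+1) (z k) = if s - t ≤ k then τ k else β (z k) := by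
        intro k hk
        rw [hgs]
        by_cases hkj : k = s - t
        · subst hkj
          rw [Function.update_self, if_pos le_rfl]
        · rw [Function.update_of_ne (hnd k (s - t) hk (by omega) hkj)]
          rcases le_or_gt (s - t) k with h | h
          · rw [if_pos h, (ih1 k hk).1 (by omega)]
          · rw [if_neg (by omega), (ih1 k hk).2 (by omega)]
      refine ⟨?_, ?_, ?_⟩
      · intro k hk
        rw [hval k hk]
        constructor
        · intro h
          rw [if_pos (by omega)]
        · intro h
          rw [if_neg (by omega)]
      · intro v hv
        rw [hgs, Function.update_of_ne (hv (s - t) (by omega))]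
        exact ih2 v hv
      · -- properness
        have hvalnc : ∀ v, (∀ k, k ≤ s → v ≠ z k) → g (t+1) v = β v := by
          intro v hv
          rw [hgs, Function.update_of_ne (hv (s - t) (by omega))]
          exact ih2 v hv
        have main : ∀ a b, a ≤ s → b ≤ s → a < b → G.Adj (z a) (z b) →
            g (t+1) (z a) ≠ g (t+1) (z b) := by
          intro a b ha hb hab hadj
          rcases (by omega : b = a + 1 ∨ a + 2 ≤ b) with h | h
          · subst h
            rw [hval a ha, hval (a+1) hb]
            rcases le_or_gt (s - t) a with h1 | h1
            · rw [if_pos h1, if_pos (by omega)]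
              exact htau_step a (by omega)
            · rw [if_neg (by omega)]
              rcases le_or_gt (s - t) (a+1) with h2 | h2
              · rw [if_pos h2]
                exact fun he => htau_free (a+1) hb (z a) hadj.symm
                  (fun h3 hc => (hnd a (a+2) ha (by omega) (by omega)) hc) he
              · rw [if_neg (by omega)]
                exact hβ _ _ hadj
          · exact absurd hadj (hind a b h hb)
        have mixed : ∀ a w, a ≤ s → (∀ k, k ≤ s → w ≠ z k) → G.Adj (z a) w →
            g (t+1) (z a) ≠ g (t+1) w := by
          intro a w ha hw hadj
          rw [hval a ha, hvalnc w hw]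
          rcases le_or_gt (s - t) a with h1 | h1
          · rw [if_pos h1]
            exact fun he => htau_free a ha w hadj
              (fun h3 hc => hw (a+1) (by omega) hc) he.symm
          · rw [if_neg (by omega)]
            exact hβ _ _ hadj
        intro u w hadj
        by_cases hu : ∃ k, k ≤ s ∧ u = z k
        · obtain ⟨a, ha, rfl⟩ := hu
          by_cases hw : ∃ k, k ≤ s ∧ w = z k
          · obtain ⟨b, hb, rfl⟩ := hw
            have hne : a ≠ b := by
              intro he
              subst he
              exact G.loopless.irrefl _ hadj
            rcases lt_or_gt_of_ne hne with h | h
            · exact main a b ha hb h hadj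
            · exact fun he => main b a hb ha h hadj.symm he.symm
          · push_neg at hw
            exact mixed a w ha (fun k hk => hw k hk) hadj
        · push_neg at hu
          by_cases hw : ∃ k, k ≤ s ∧ w = z k
          · obtain ⟨b, hb, rfl⟩ := hw
            exact fun he => mixed b u hb (fun k hk => hu k hk) hadj.symm he.symm
          · push_neg at hw
            rw [hvalnc u (fun k hk => hu k hk), hvalnc w (fun k hk => hw k hk)]
            exact hβ _ _ hadj
  -- conclude
  have hssx : s ≤ rank x := by
    have := hrk s le_rfl
    omega
  refine ⟨g (s+1), ⟨s+1, g, by omega, hg0, rfl, ?_, ?_⟩, ((INV (s+1) le_rfl).2.2), ?_, ?_⟩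
  · intro i hi
    exact (INV i hi).2.2
  · intro i hi
    refine ⟨z (s - i), ?_, ?_⟩
    · show g i (z (s - i)) ≠ g (i+1) (z (s - i))
      rw [hgs i, Function.update_self,
        ((INV i (by omega)).1 (s - i) (by omega)).2 (by omega)]
      exact fun he => htau_ne (s - i) (by omega) he.symm
    · intro v hv
      by_contra hne
      apply hv
      show g i v = g (i+1) v
      rw [hgs i, Function.update_of_ne hne]
  · -- β' x ≠ top
    have h0 : g (s+1) (z 0) = τ 0 := ((INV (s+1) le_rfl).1 0 (by omega)).1 (by omega)
    rw [← hz0, h0]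
    rcases Nat.eq_zero_or_pos s with h | h
    · simp only [hτ, if_pos h.symm]
      rw [h] at hcf1
      rw [hz0, hx] at hcf1
      exact hcf1
    · simp only [hτ, if_neg (by omega : ¬ (0:ℕ) = s)]
      have := hβ _ _ (hz.1 0 h).1
      rw [hz0, hx] at this
      exact fun he => this he.symm
  · intro v hv
    apply (INV (s+1) le_rfl).2.1
    intro k hk he
    have := hrk k hk
    rw [he] at hv
    omega


theorem main_loop {Δ : ℕ} (hΔ : 1 ≤ Δ) (hdegΔ : ∀ v, G.degree v ≤ Δ)
    {rank : V → ℕ} (hrinj : Function.Injective rank)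
    (hrank : ∀ v, rank v < Fintype.card V)
    (hlater : ∀ v, ((G.neighborFinset v).filter (fun u => rank v < rank u)).card ≤ Δ - 1)
    (hsurj : ∀ j, j < Fintype.card V → ∃ x, rank x = j)
    (α : V → Fin (Δ + 1)) (hα : ∀ u v, G.Adj u v → α u ≠ α v) :
    ∀ k, k ≤ Fintype.card V → ∃ β : V → Fin (Δ + 1),
      Reach G α β (k * Fintype.card V) ∧ (∀ u w, G.Adj u w → β u ≠ β w) ∧
      ∀ v, Fintype.card V - k ≤ rank v → β v ≠ Fin.last Δ := by
  set n := Fintype.card V with hn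
  intro k
  induction k with
  | zero =>
    intro _
    refine ⟨α, by simpa using reach_refl G α hα (0 * n), hα, ?_⟩
    intro v hv
    have := hrank v
    omega
  | succ k ih =>
    intro hk
    obtain ⟨β, hR, hβp, hβtop⟩ := ih (by omega)
    obtain ⟨x, hxr⟩ := hsurj (n - k - 1) (by omega)
    by_cases htop : β x = Fin.last Δ
    · obtain ⟨β', hR', hβ'p, hβ'x, hβ'un⟩ := phase G hΔ hdegΔ hrinj hlater hβp x htop
      refine ⟨β', ?_, hβ'p, ?_⟩
      · have h1 := reach_trans G hR hR'
        apply reach_mono G _ h1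
        have : (k + 1) * n = k * n + n := by ring
        omega
      · intro v hv
        by_cases hvx : v = x
        · subst hvx; exact hβ'x
        · have hne : rank v ≠ rank x := fun he => hvx (hrinj he)
          have h2 : rank x < rank v := by omega
          rw [hβ'un v h2]
          exact hβtop v (by omega)
    · refine ⟨β, reach_mono G (by nlinarith) hR, hβp, ?_⟩
      intro v hv
      by_cases hvx : v = x
      · subst hvx; exact htop
      · have hne : rank v ≠ rank x := fun he => hvx (hrinj he)
        exact hβtop v (by omega)

end DegenReachAux

/-- Lemma 10: if G has maximum degree Δ ≥ 1 and degeneracy Δ - 1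
(it is (Δ-1)-degenerate and no smaller d works), then from any (Δ+1)-colouring α
one can reach a Δ-colouring γ with d_{Δ+1}(α, γ) ≤ n². -/
theorem degenerate_reach_delta_colouring {V : Type} [Fintype V] [DecidableEq V]
    (G : SimpleGraph V) [DecidableRel G.Adj] (Δ : ℕ) (hΔ : 1 ≤ Δ)
    (hmax : G.maxDegree = Δ)
    (hdeg : Degenerate G (Δ - 1)) (hleast : ∀ d : ℕ, Degenerate G d → Δ - 1 ≤ d)
    (α : V → Fin (Δ + 1)) (hα : ∀ u v, G.Adj u v → α u ≠ α v) :
    ∃ γ : V → Fin (Δ + 1), (∀ u v, G.Adj u v → γ u ≠ γ v) ∧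
      (∀ v, (γ v : ℕ) < Δ) ∧ Reach G α γ (Fintype.card V ^ 2) := by
  classical
  obtain ⟨rank, hrinj, hrank, hlater, hsurj⟩ := DegenReachAux.exists_rank G hdeg
  have hdegΔ : ∀ v, G.degree v ≤ Δ := by
    intro v
    rw [← hmax]
    exact G.degree_le_maxDegree v
  obtain ⟨γ, hRγ, hγp, hγtop⟩ := DegenReachAux.main_loop G hΔ hdegΔ hrinj hrank hlater hsurj
    α hα (Fintype.card V) le_rfl
  refine ⟨γ, hγp, ?_, ?_⟩
  · intro v
    have h1 := hγtop v (by omega)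
    have h2 := (γ v).isLt
    have h3 : (γ v : ℕ) ≠ Δ := by
      intro he
      apply h1
      apply Fin.ext
      simpa using he
    omega
  · have : Fintype.card V ^ 2 = Fintype.card V * Fintype.card V := by ring
    rw [this]
    exact hRγ
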